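/- Let U ⊆ ℂ ∖ ((−∞,0] ∪ {0}) be open and F : U → ℂ holomorphic. Define Z_m(c) = (1/2π)·(c − c·log c + F(c)) (principal branch of log) and Z_e(c) = −i·c. Then for every c ∈ U and all u, v ∈ ℂ (writing u = u₁ + i·u₂, v = v₁ + i·v₂), Re[ Z_m′(c)·u · conj(Z_e′(c)·v) − Z_m′(c)·v · conj(Z_e′(c)·u) ] = (1/π)·( Re F′(c) − ln|c| )·( u₁v₂ − u₂v₁ ). Equivalently, Re(dZ_m ∧ dZ̄_e) = (1/π)(Re F′ − ln|c|)·dc₁∧dc₂. -/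

import Mathlib

/-- for the central charges `Z_m(c) = (1/2π)(c − c·log c + F(c))`,
`Z_e(c) = −i·c` with `F` holomorphic on an open set `U` contained in the slit plane
`ℂ ∖ ((−∞,0] ∪ {0})`, one has
`Re(dZ_m ∧ dZ̄_e) = (1/π)(Re F′ − ln|c|)·dc₁∧dc₂` on `U`. -/
theorem stmt6 (U : Set ℂ) (hU : IsOpen U) (hUs : U ⊆ Complex.slitPlane)
    (F : ℂ → ℂ) (hF : DifferentiableOn ℂ F U)
    (Zm Ze : ℂ → ℂ)
    (hZm : ∀ c : ℂ, Zm c = ((1 / (2 * Real.pi) : ℝ) : ℂ) * (c - c * Complex.log c + F c))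
    (hZe : ∀ c : ℂ, Ze c = -Complex.I * c) :
    ∀ c ∈ U, ∀ u v : ℂ,
      (deriv Zm c * u * (starRingEnd ℂ) (deriv Ze c * v)
        - deriv Zm c * v * (starRingEnd ℂ) (deriv Ze c * u)).re
      = (1 / Real.pi) * ((deriv F c).re - Real.log ‖c‖)
          * (u.re * v.im - u.im * v.re) := by
  intro c hcU u v
  have hc : c ∈ Complex.slitPlane := hUs hcU
  have hc0 : c ≠ 0 := Complex.slitPlane_ne_zero hc
  have hF' : HasDerivAt F (deriv F c) c :=
    (hF.differentiableAt (hU.mem_nhds hcU)).hasDerivAt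
  have hlog : HasDerivAt Complex.log c⁻¹ c := Complex.hasDerivAt_log hc
  have h1 : HasDerivAt (fun z : ℂ => z - z * Complex.log z + F z)
      (1 - (1 * Complex.log c + c * c⁻¹) + deriv F c) c :=
    ((hasDerivAt_id c).sub ((hasDerivAt_id c).mul hlog)).add hF'
  have h2 : HasDerivAt Zm
      (((1 / (2 * Real.pi) : ℝ) : ℂ) * (1 - (1 * Complex.log c + c * c⁻¹) + deriv F c)) c := by
    have := h1.const_mul (((1 / (2 * Real.pi) : ℝ) : ℂ))
    exact this.congr_of_eventuallyEq (Filter.Eventually.of_forall fun z => (hZm z))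
  have hZm' : deriv Zm c
      = ((1 / (2 * Real.pi) : ℝ) : ℂ) * (deriv F c - Complex.log c) := by
    rw [h2.deriv]
    field_simp
    ring
  have hZe' : deriv Ze c = -Complex.I := by
    have h : HasDerivAt Ze (-Complex.I) c := by
      have := (hasDerivAt_id c).const_mul (-Complex.I)
      simpa [hZe] using this.congr_of_eventuallyEq
        (Filter.Eventually.of_forall fun z => (hZe z))
    exact h.deriv
  rw [hZm', hZe', ← Complex.log_re]
  have hπ : (Real.pi : ℝ) ≠ 0 := Real.pi_ne_zero
  simp only [Complex.sub_re, Complex.mul_re, Complex.mul_im, map_mul, Complex.conj_re,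
    Complex.conj_im, Complex.neg_re, Complex.neg_im, Complex.I_re, Complex.I_im,
    Complex.ofReal_re, Complex.ofReal_im, Complex.sub_im, Complex.add_re, Complex.add_im,
    Complex.one_re, Complex.one_im]
  field_simp
  ring
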